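/- Let n : ℕ and let R be a finite list of words in n generators, and let G be the finitely presented group PresentedGroup S, where S ⊆ FreeGroup (Fin n) is the set of elements determined by R. Let X be a finite list of words such that the subgroup H = Subgroup.closure of the set of elements of G represented by the words in X has finite index in G. Then membership in H is decidable: the predicate on words w asserting that the element of G represented by w lies in H satisfies ComputablePred. -/

import Mathlib

/-- The set of relators in the free group determined by a list of words. -/
def relsOf {α : Type} (R : List (List (α × Bool))) : Set (FreeGroup α) :=
  {x | ∃ r ∈ R, x = FreeGroup.mk r}

/-- The element of the presented group represented by a word. -/
def wordElt {α : Type} (R : List (List (α × Bool))) (w : List (α × Bool)) :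
    PresentedGroup (relsOf R) :=
  PresentedGroup.mk (relsOf R) (FreeGroup.mk w)

namespace MFIDAux

/-- A word in `n` generators. -/
abbrev Wrd (n : ℕ) := List (Fin n × Bool)

variable {n : ℕ}

/-! ### Witness machinery -/

/-- The base word determined by a witness entry: either a generator word from `X`,
or a conjugate of a relator from `R`. -/
def baseOf (X R : List (Wrd n)) (p : Wrd n × ℕ) : Wrd n :=
  if p.2 < X.length then X.getD p.2 []
  else if p.2 - X.length < R.length then
    p.1 ++ R.getD (p.2 - X.length) [] ++ FreeGroup.invRev p.1
  else []

/-- The word determined by a witness entry, possibly inverted. -/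
def genOf (X R : List (Wrd n)) (e : Wrd n × ℕ × Bool) : Wrd n :=
  if e.2.2 then FreeGroup.invRev (baseOf X R (e.1, e.2.1)) else baseOf X R (e.1, e.2.1)

/-- The word determined by a witness list. -/
def evalW (X R : List (Wrd n)) (l : List (Wrd n × ℕ × Bool)) : Wrd n :=
  (l.map (genOf X R)).flatten

/-- The generating set (in the free group) of the preimage subgroup. -/
def Tset (X R : List (Wrd n)) : Set (FreeGroup (Fin n)) :=
  {y | ∃ u ∈ X, y = FreeGroup.mk u} ∪ Group.conjugatesOfSet (relsOf R)

theorem comap_eq (X R : List (Wrd n)) :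
    Subgroup.comap (PresentedGroup.mk (relsOf R))
        (Subgroup.closure {x | ∃ u ∈ X, x = wordElt R u}) =
      Subgroup.closure (Tset X R) := by
  have h1 : {x | ∃ u ∈ X, x = wordElt R u} =
      (PresentedGroup.mk (relsOf R)) '' {y | ∃ u ∈ X, y = FreeGroup.mk u} := by
    ext x
    simp only [Set.mem_image, Set.mem_setOf_eq]
    constructor
    · rintro ⟨u, hu, rfl⟩; exact ⟨FreeGroup.mk u, ⟨u, hu, rfl⟩, rfl⟩
    · rintro ⟨y, ⟨u, hu, rfl⟩, rfl⟩; exact ⟨u, hu, rfl⟩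
  rw [h1, ← MonoidHom.map_closure, Subgroup.comap_map_eq]
  have hker : (PresentedGroup.mk (relsOf R)).ker = Subgroup.normalClosure (relsOf R) :=
    QuotientGroup.ker_mk' _
  rw [hker, Tset, Subgroup.closure_union]
  rfl

theorem mk_baseOf_mem (X R : List (Wrd n)) (p : Wrd n × ℕ) :
    FreeGroup.mk (baseOf X R p) ∈ Subgroup.closure (Tset X R) := by
  unfold baseOf
  split_ifs with h1 h2
  · refine Subgroup.subset_closure (Or.inl ⟨X.getD p.2 [], ?_, rfl⟩)
    rw [List.getD_eq_getElem _ _ h1]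
    exact List.getElem_mem _
  · refine Subgroup.subset_closure (Or.inr ?_)
    rw [← FreeGroup.mul_mk, ← FreeGroup.mul_mk, ← FreeGroup.inv_mk]
    refine Group.mem_conjugatesOfSet_iff.2 ⟨FreeGroup.mk (R.getD (p.2 - X.length) []), ?_, ?_⟩
    · refine ⟨R.getD (p.2 - X.length) [], ?_, rfl⟩
      rw [List.getD_eq_getElem _ _ h2]
      exact List.getElem_mem _
    · exact isConj_iff.2 ⟨FreeGroup.mk p.1, by group⟩
  · rw [← FreeGroup.one_eq_mk]; exact Subgroup.one_mem _

theorem mk_genOf_mem (X R : List (Wrd n)) (e : Wrd n × ℕ × Bool) :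
    FreeGroup.mk (genOf X R e) ∈ Subgroup.closure (Tset X R) := by
  unfold genOf
  split_ifs with hb
  · rw [← FreeGroup.inv_mk]; exact Subgroup.inv_mem _ (mk_baseOf_mem X R _)
  · exact mk_baseOf_mem X R _

theorem mem_closure_T_iff (X R : List (Wrd n)) (w : Wrd n) :
    FreeGroup.mk w ∈ Subgroup.closure (Tset X R) ↔
      ∃ l : List (Wrd n × ℕ × Bool), FreeGroup.mk w = FreeGroup.mk (evalW X R l) := by
  constructor
  · intro hw
    have hw' : FreeGroup.mk w ∈ Submonoid.closure (Tset X R ∪ (Tset X R)⁻¹) := by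
      rw [← Subgroup.closure_toSubmonoid]; exact hw
    obtain ⟨ls, hls, hprod⟩ := Submonoid.exists_list_of_mem_closure hw'
    have hT : ∀ y ∈ Tset X R, ∃ c i, FreeGroup.mk (genOf X R (c, i, false)) = y := by
      rintro y (⟨u, hu, rfl⟩ | hy)
      · obtain ⟨i, hi, hget⟩ := List.mem_iff_getElem.1 hu
        refine ⟨[], i, ?_⟩
        simp only [genOf, if_neg (Bool.false_ne_true), baseOf, if_pos hi]
        rw [List.getD_eq_getElem _ _ hi, hget]
      · obtain ⟨a, ⟨r, hr, rfl⟩, hconj⟩ := Group.mem_conjugatesOfSet_iff.1 hy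
        obtain ⟨c, rfl⟩ := isConj_iff.1 hconj
        obtain ⟨j, hj, hget⟩ := List.mem_iff_getElem.1 hr
        refine ⟨c.toWord, X.length + j, ?_⟩
        have hnot : ¬ (X.length + j < X.length) := by omega
        simp only [genOf, if_neg (Bool.false_ne_true), baseOf, if_neg hnot,
          Nat.add_sub_cancel_left, if_pos hj]
        rw [List.getD_eq_getElem _ _ hj, hget, ← FreeGroup.mul_mk, ← FreeGroup.mul_mk,
          ← FreeGroup.inv_mk, FreeGroup.mk_toWord]
    have hTfull : ∀ y ∈ Tset X R ∪ (Tset X R)⁻¹, ∃ e, FreeGroup.mk (genOf X R e) = y := by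
      rintro y (hy | hy)
      · obtain ⟨c, i, he⟩ := hT y hy; exact ⟨(c, i, false), he⟩
      · obtain ⟨c, i, he⟩ := hT y⁻¹ (Set.mem_inv.1 hy)
        refine ⟨(c, i, true), ?_⟩
        have h2 : genOf X R (c, i, true) = FreeGroup.invRev (genOf X R (c, i, false)) := by
          simp [genOf]
        rw [h2, ← FreeGroup.inv_mk, he, inv_inv]
    have key : ∀ ls : List (FreeGroup (Fin n)), (∀ y ∈ ls, y ∈ Tset X R ∪ (Tset X R)⁻¹) →
        ∃ l, FreeGroup.mk (evalW X R l) = ls.prod := by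
      intro ls hls
      induction ls with
      | nil => exact ⟨[], by simp [evalW, ← FreeGroup.one_eq_mk]⟩
      | cons y t iht =>
        obtain ⟨l, hl⟩ := iht fun z hz => hls z (List.mem_cons_of_mem _ hz)
        obtain ⟨e, he⟩ := hTfull y (hls y List.mem_cons_self)
        refine ⟨e :: l, ?_⟩
        rw [List.prod_cons, ← he, ← hl, evalW, evalW, List.map_cons, List.flatten_cons,
          ← FreeGroup.mul_mk]
    obtain ⟨l, hl⟩ := key ls hls
    exact ⟨l, (hl.trans hprod).symm⟩
  · rintro ⟨l, hl⟩
    rw [hl]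
    have key : ∀ l : List (Wrd n × ℕ × Bool),
        FreeGroup.mk (evalW X R l) ∈ Subgroup.closure (Tset X R) := by
      intro l
      induction l with
      | nil =>
        rw [evalW]
        simpa [← FreeGroup.one_eq_mk] using Subgroup.one_mem (Subgroup.closure (Tset X R))
      | cons e t ih =>
        rw [evalW, List.map_cons, List.flatten_cons, ← FreeGroup.mul_mk]
        exact Subgroup.mul_mem _ (mk_genOf_mem X R e) ih
    exact key l

/-! ### Primitive recursiveness -/

theorem primrec_invRev : Primrec (fun w : Wrd n => FreeGroup.invRev w) := by
  have h : Primrec fun w : Wrd n => (w.map fun x => (x.1, !x.2)).reverse :=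
    Primrec.list_reverse.comp (Primrec.list_map Primrec.id
      ((Primrec.pair (Primrec.fst.comp Primrec.snd)
        ((Primrec.dom_finite not).comp (Primrec.snd.comp Primrec.snd)))))
  exact h.of_eq fun w => by simp [FreeGroup.invRev]

theorem primrec_baseOf (X R : List (Wrd n)) : Primrec (baseOf X R) := by
  unfold baseOf
  have h2 : Primrec fun p : Wrd n × ℕ => p.2 := Primrec.snd
  have hsub : Primrec fun p : Wrd n × ℕ => p.2 - X.length :=
    Primrec.nat_sub.comp h2 (Primrec.const _)
  refine Primrec.ite (Primrec.nat_lt.comp h2 (Primrec.const _)) ?_ ?_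
  · exact (Primrec.list_getD []).comp (Primrec.const X) h2
  · refine Primrec.ite (Primrec.nat_lt.comp hsub (Primrec.const _)) ?_ (Primrec.const [])
    exact Primrec.list_append.comp
      (Primrec.list_append.comp Primrec.fst ((Primrec.list_getD []).comp (Primrec.const R) hsub))
      (primrec_invRev.comp Primrec.fst)

theorem primrec_genOf (X R : List (Wrd n)) : Primrec (genOf X R) := by
  unfold genOf
  have hb : Primrec fun e : Wrd n × ℕ × Bool => e.2.2 := Primrec.snd.comp Primrec.snd
  have hp : Primrec fun e : Wrd n × ℕ × Bool => baseOf X R (e.1, e.2.1) :=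
    (primrec_baseOf X R).comp (Primrec.pair Primrec.fst (Primrec.fst.comp Primrec.snd))
  exact Primrec.ite (Primrec.eq.comp hb (Primrec.const true))
    (primrec_invRev.comp hp) hp |>.of_eq fun e => by by_cases h : e.2.2 <;> simp [h]

theorem primrec_evalW (X R : List (Wrd n)) : Primrec (evalW X R) :=
  Primrec.list_flatten.comp
    (Primrec.list_map Primrec.id ((primrec_genOf X R).comp Primrec.snd).to₂)

/-- The step function of free reduction. -/
def stepFn (p : (Fin n × Bool) × Wrd n) : Wrd n :=
  List.casesOn p.2 [p.1] fun hd tl => if p.1 = (hd.1, !hd.2) then tl else p.1 :: hd :: tl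

theorem reduce_eq_foldr (L : Wrd n) :
    FreeGroup.reduce L = L.foldr (fun x ih => stepFn (x, ih)) [] := by
  induction L with
  | nil => rfl
  | cons x L ih =>
    rw [FreeGroup.reduce.cons, List.foldr_cons, ← ih]
    cases h : FreeGroup.reduce L with
    | nil => rfl
    | cons hd tl =>
      show _ = stepFn (x, hd :: tl)
      unfold stepFn
      by_cases hc : x.1 = hd.1 ∧ x.2 = !hd.2 <;> simp [hc, Prod.ext_iff]

theorem primrec_stepFn : Primrec (stepFn (n := n)) := by
  unfold stepFn
  exact Primrec.list_casesOn Primrec.snd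
    ((Primrec.list_cons).comp Primrec.fst (Primrec.const []))
    (Primrec.ite
      (Primrec.eq.comp (Primrec.fst.comp Primrec.fst)
        (Primrec.pair (Primrec.fst.comp (Primrec.fst.comp Primrec.snd))
          ((Primrec.dom_finite not).comp (Primrec.snd.comp (Primrec.fst.comp Primrec.snd)))))
      (Primrec.snd.comp Primrec.snd)
      (Primrec.list_cons.comp (Primrec.fst.comp Primrec.fst)
        (Primrec.list_cons.comp (Primrec.fst.comp Primrec.snd)
          (Primrec.snd.comp Primrec.snd)))).to₂

theorem primrec_reduce : Primrec (fun L : Wrd n => FreeGroup.reduce L) := by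
  have h : Primrec fun L : Wrd n => L.foldr (fun x ih => stepFn (x, ih)) [] :=
    Primrec.list_foldr Primrec.id (Primrec.const []) (primrec_stepFn.comp Primrec.snd).to₂
  exact h.of_eq fun L => (reduce_eq_foldr L).symm

/-- The verification function: does the witness `l` prove that `w` is in the subgroup? -/
def fch (X R : List (Wrd n)) (w : Wrd n) (l : List (Wrd n × ℕ × Bool)) : Bool :=
  decide (FreeGroup.reduce w = FreeGroup.reduce (evalW X R l))

theorem primrec_fch (X R : List (Wrd n)) : Primrec₂ (fch X R) :=
  (Primrec.eq.comp (primrec_reduce.comp Primrec.fst)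
    (primrec_reduce.comp ((primrec_evalW X R).comp Primrec.snd))).decide

theorem fch_iff (X R : List (Wrd n)) (w : Wrd n) :
    (∃ l, fch X R w l = true) ↔ FreeGroup.mk w ∈ Subgroup.closure (Tset X R) := by
  rw [mem_closure_T_iff]
  constructor
  · rintro ⟨l, hl⟩
    exact ⟨l, FreeGroup.reduce.exact (by simpa [fch] using hl)⟩
  · rintro ⟨l, hl⟩
    refine ⟨l, ?_⟩
    have := congrArg FreeGroup.toWord hl
    rw [FreeGroup.toWord_mk, FreeGroup.toWord_mk] at this
    simpa [fch] using this

/-- A computable two-argument boolean test whose witnessed existential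
is the given predicate shows the predicate is r.e. -/
theorem rePred_exists {α β : Type} [Primcodable α] [Primcodable β] {f : α → β → Bool}
    (hf : Computable₂ f) : REPred fun a => ∃ b, f a b = true := by
  have h : Computable₂ fun (a : α) (k : ℕ) =>
      ((Encodable.decode k : Option β).casesOn false (f a) : Bool) :=
    Computable.option_casesOn (Computable.decode.comp Computable.snd)
      (Computable.const false) (hf.comp (Computable.fst.comp Computable.fst) Computable.snd).to₂
  have h2 := (Partrec.rfind h.partrec₂).dom_re
  apply h2.of_eq
  intro a
  rw [Nat.rfind_dom]
  constructor
  · rintro ⟨m, h1, -⟩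
    simp only [PFun.coe_val, Part.mem_some_iff] at h1
    cases hd : (Encodable.decode m : Option β) with
    | none => rw [hd] at h1; exact absurd h1.symm (by simp)
    | some b => rw [hd] at h1; exact ⟨b, h1.symm⟩
  · rintro ⟨b, hb⟩
    refine ⟨Encodable.encode b, ?_, fun _ => trivial⟩
    simp only [PFun.coe_val, Part.mem_some_iff, Encodable.encodek]
    exact hb.symm

end MFIDAux

open MFIDAux
/-- Membership in a finite-index subgroup, given by a finite generating set of words,
is decidable. -/
theorem membership_finite_index_decidable (n : ℕ) (R : List (List (Fin n × Bool)))
    (X : List (List (Fin n × Bool)))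
    (hfi : (Subgroup.closure {x | ∃ u ∈ X, x = wordElt R u}).FiniteIndex) :
    ComputablePred fun w : List (Fin n × Bool) =>
      wordElt R w ∈ Subgroup.closure {x | ∃ u ∈ X, x = wordElt R u} := by
  classical
  set H := Subgroup.closure {x | ∃ u ∈ X, x = wordElt R u} with hH
  -- membership is equivalent to an existential over witnesses
  have hmem : ∀ w : Wrd n, (wordElt R w ∈ H ↔ ∃ l, fch X R w l = true) := by
    intro w
    rw [fch_iff X R w, ← comap_eq X R]
    rfl
  -- the quotient is finite; choose coset representatives
  haveI : Fintype (PresentedGroup (relsOf R) ⧸ H) := H.fintypeQuotientOfFiniteIndex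
  have hsurj : ∀ c : PresentedGroup (relsOf R) ⧸ H,
      ∃ v : Wrd n, (QuotientGroup.mk (wordElt R v) : PresentedGroup (relsOf R) ⧸ H) = c := by
    intro c
    obtain ⟨g, rfl⟩ := Quotient.exists_rep c
    obtain ⟨y, rfl⟩ := PresentedGroup.mk_surjective (relsOf R) g
    exact ⟨y.toWord, by rw [wordElt, FreeGroup.mk_toWord]⟩
  choose ch hch using hsurj
  set L : List (Wrd n) := ((Finset.univ : Finset (PresentedGroup (relsOf R) ⧸ H)).toList.filter
    (fun c => c ≠ (QuotientGroup.mk (1 : PresentedGroup (relsOf R))))).map ch with hL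
  have hL1 : ∀ v ∈ L, wordElt R v ∉ H := by
    intro v hv hmemH
    obtain ⟨c, hc, rfl⟩ := List.mem_map.1 hv
    have hcne := of_decide_eq_true ((List.mem_filter.1 hc).2)
    apply hcne
    rw [← hch c, eq_comm, QuotientGroup.eq]
    simpa using hmemH
  have hL2 : ∀ w : Wrd n, wordElt R w ∉ H →
      ∃ v ∈ L, (wordElt R v)⁻¹ * wordElt R w ∈ H := by
    intro w hw
    set c : PresentedGroup (relsOf R) ⧸ H := QuotientGroup.mk (wordElt R w) with hc
    have hcne : c ≠ QuotientGroup.mk (1 : PresentedGroup (relsOf R)) := by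
      intro h
      apply hw
      have := (QuotientGroup.eq (s := H)).1 h.symm
      simpa using this
    refine ⟨ch c, List.mem_map.2 ⟨c, ?_, rfl⟩, ?_⟩
    · exact List.mem_filter.2 ⟨Finset.mem_toList.2 (Finset.mem_univ c), decide_eq_true hcne⟩
    · exact (QuotientGroup.eq (s := H)).1 (hch c)
  -- word-level combination of v and w
  have hcomb : ∀ (v w : Wrd n),
      wordElt R (FreeGroup.invRev v ++ w) = (wordElt R v)⁻¹ * wordElt R w := by
    intro v w
    simp only [wordElt, ← FreeGroup.mul_mk, ← FreeGroup.inv_mk, map_mul, map_inv]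
  -- the negation test
  have hneg : ∀ w : Wrd n, (¬ (wordElt R w ∈ H) ↔ ∃ q : ℕ × List (Wrd n × ℕ × Bool),
      (if q.1 < L.length then fch X R (FreeGroup.invRev (L.getD q.1 []) ++ w) q.2
       else false) = true) := by
    intro w
    constructor
    · intro hw
      obtain ⟨v, hvL, hvw⟩ := hL2 w hw
      obtain ⟨i, hi, hget⟩ := List.mem_iff_getElem.1 hvL
      rw [← hcomb] at hvw
      obtain ⟨l, hl⟩ := (hmem _).1 hvw
      refine ⟨(i, l), ?_⟩
      simp only [if_pos hi]
      rw [List.getD_eq_getElem _ _ hi, hget]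
      exact hl
    · rintro ⟨⟨i, l⟩, hq⟩ hmemH
      simp only at hq
      by_cases hi : i < L.length
      · rw [if_pos hi] at hq
        set v : Wrd n := L.getD i [] with hv
        have hvL : v ∈ L := by
          rw [hv, List.getD_eq_getElem _ _ hi]; exact List.getElem_mem _
        have : wordElt R (FreeGroup.invRev v ++ w) ∈ H := (hmem _).2 ⟨l, hq⟩
        rw [hcomb] at this
        apply hL1 v hvL
        have h3 : wordElt R v = wordElt R w * ((wordElt R v)⁻¹ * wordElt R w)⁻¹ := by group
        rw [h3]
        exact H.mul_mem hmemH (H.inv_mem this)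
      · rw [if_neg hi] at hq
        exact absurd hq (by simp)
  -- computability of the two tests
  rw [ComputablePred.computable_iff_re_compl_re']
  constructor
  · exact (rePred_exists (primrec_fch X R).to_comp).of_eq fun w => ((hmem w).symm)
  · refine (rePred_exists (f := fun (w : Wrd n) (q : ℕ × List (Wrd n × ℕ × Bool)) =>
      (if q.1 < L.length then fch X R (FreeGroup.invRev (L.getD q.1 []) ++ w) q.2
       else false)) ?_).of_eq fun w => ((hneg w).symm)
    have hq1 : Primrec fun p : Wrd n × ℕ × List (Wrd n × ℕ × Bool) => p.2.1 :=
      Primrec.fst.comp Primrec.snd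
    refine Primrec₂.to_comp ?_
    refine Primrec.ite (Primrec.nat_lt.comp hq1 (Primrec.const _)) ?_ (Primrec.const false)
    exact (primrec_fch X R).comp
      (Primrec.list_append.comp
        (primrec_invRev.comp ((Primrec.list_getD []).comp (Primrec.const L) hq1))
        Primrec.fst)
      (Primrec.snd.comp Primrec.snd)
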